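/- For q ∈ (0,1), n ≥ 2, and all x ≥ 0, |v_n(x) - x| ≤ (1 - sqrt(q(1 - 1/[n]_q)))·x + 1/(2[n]_q), where v_n(x) = sqrt( ((q[n]_q - q)/[n]_q) x^2 + 1/(4[n]_q^2) ) - 1/(2[n]_q). -/

import Mathlib

theorem abs_vn_sub_x_le (q : ℝ) (hq0 : 0 < q) (hq1 : q < 1) (n : ℕ) (hn : 2 ≤ n)
    (x : ℝ) (hx : 0 ≤ x) :
    |Real.sqrt ((q * ((1 - q ^ n) / (1 - q)) - q) / ((1 - q ^ n) / (1 - q)) * x ^ 2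
          + 1 / (4 * ((1 - q ^ n) / (1 - q)) ^ 2))
        - 1 / (2 * ((1 - q ^ n) / (1 - q))) - x|
      ≤ (1 - Real.sqrt (q * (1 - 1 / ((1 - q ^ n) / (1 - q))))) * x
          + 1 / (2 * ((1 - q ^ n) / (1 - q))) := by
  set N := (1 - q ^ n) / (1 - q) with hNdef
  have hqn : q ^ n < q := by
    calc q ^ n ≤ q ^ 2 := pow_le_pow_of_le_one hq0.le hq1.le hn
    _ < q := by nlinarith
  have hN : 1 < N := by
    rw [hNdef, lt_div_iff₀ (by linarith)]
    linarith
  have hN0 : 0 < N := by linarith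
  have hceq : (q * N - q) / N = q * (1 - 1 / N) := by
    field_simp
  rw [hceq]
  set c := q * (1 - 1 / N) with hcdef
  have hc0 : 0 ≤ c := by
    have : 0 < 1 - 1 / N := by
      have : 1 / N < 1 := by rw [div_lt_one hN0]; linarith
      linarith
    positivity
  have hc1 : c ≤ 1 := by
    have h1 : 1 / N > 0 := by positivity
    nlinarith
  have hsc1 : Real.sqrt c ≤ 1 := Real.sqrt_le_one.mpr hc1
  have hscx : Real.sqrt (c * x ^ 2) = Real.sqrt c * x := by
    rw [Real.sqrt_mul hc0, Real.sqrt_sq hx]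
  have hsc0 : 0 ≤ Real.sqrt c := Real.sqrt_nonneg c
  have hupper : Real.sqrt (c * x ^ 2 + 1 / (4 * N ^ 2))
      ≤ Real.sqrt c * x + 1 / (2 * N) := by
    have h : c * x ^ 2 + 1 / (4 * N ^ 2) ≤ (Real.sqrt c * x + 1 / (2 * N)) ^ 2 := by
      have h1 : Real.sqrt c ^ 2 = c := Real.sq_sqrt hc0
      have h2 : (0:ℝ) ≤ Real.sqrt c * x * (1 / (2 * N)) := by positivity
      have h3 : (1 / (2 * N)) ^ 2 = 1 / (4 * N ^ 2) := by field_simp; ring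
      nlinarith
    calc Real.sqrt (c * x ^ 2 + 1 / (4 * N ^ 2))
        ≤ Real.sqrt ((Real.sqrt c * x + 1 / (2 * N)) ^ 2) := Real.sqrt_le_sqrt h
      _ = Real.sqrt c * x + 1 / (2 * N) := Real.sqrt_sq (by positivity)
  have hlower : Real.sqrt c * x ≤ Real.sqrt (c * x ^ 2 + 1 / (4 * N ^ 2)) := by
    rw [← hscx]
    apply Real.sqrt_le_sqrt
    have : 0 < 1 / (4 * N ^ 2) := by positivity
    linarith
  rw [abs_le]
  constructor
  · nlinarith
  · nlinarith
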